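/- For 0 < a < 1 and b > 0, the function F(x;a,b) = Λ(x+1;a,b)/(1 - log a)^b, where Λ(x;a,b) = (1 - a^x + ((1+x) a^x - 1) log a)^b, is a valid CDF on the nonnegative integers: it is nondecreasing in x, takes values in [0,1], and tends to 1 as x → ∞. -/

import Mathlib

/-- The function Λ(x;a,b) = (1 - a^x + ((1+x)a^x - 1) log a)^b. -/
noncomputable def Lam (a b : ℝ) (x : ℕ) : ℝ :=
  (1 - a ^ x + ((1 + (x : ℝ)) * a ^ x - 1) * Real.log a) ^ b

/-- CDF of the exponentiated discrete Lindley distribution (EDLiD). -/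
noncomputable def F (a b : ℝ) (x : ℕ) : ℝ :=
  Lam a b (x + 1) / (1 - Real.log a) ^ b

private noncomputable def gg (a : ℝ) (x : ℕ) : ℝ :=
  1 - a ^ x + ((1 + (x : ℝ)) * a ^ x - 1) * Real.log a

private lemma gg_mono {a : ℝ} (ha0 : 0 < a) (ha1 : a < 1) : Monotone (gg a) := by
  have hL : Real.log a < 0 := Real.log_neg ha0 ha1
  have hlog : a * (-Real.log a) ≤ 1 - a := by
    have h := Real.log_le_sub_one_of_pos (x := a⁻¹) (by positivity)
    rw [Real.log_inv] at h
    have := mul_le_mul_of_nonneg_left h ha0.le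
    calc a * (-Real.log a) ≤ a * (a⁻¹ - 1) := this
      _ = 1 - a := by field_simp
  refine monotone_nat_of_le_succ fun x => ?_
  have key : ((1 + (x:ℝ)) - (2 + (x:ℝ)) * a) * Real.log a ≤ 1 - a := by
    set c : ℝ := (1 + (x:ℝ)) - (2 + (x:ℝ)) * a with hc
    have hca : -a ≤ c := by
      have : (0:ℝ) ≤ (1 + (x:ℝ)) * (1 - a) := by
        have : (0:ℝ) ≤ (1 + (x:ℝ)) := by positivity
        nlinarith
      nlinarith
    nlinarith [mul_nonneg (by linarith : (0:ℝ) ≤ c + a) (by linarith : 0 ≤ -Real.log a)]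
  have hdiff : gg a (x + 1) - gg a x
      = a ^ x * ((1 - a) - ((1 + (x:ℝ)) - (2 + (x:ℝ)) * a) * Real.log a) := by
    simp only [gg, pow_succ]
    push_cast
    ring
  nlinarith [pow_pos ha0 x, mul_nonneg (pow_pos ha0 x).le (by linarith :
    (0:ℝ) ≤ (1 - a) - ((1 + (x:ℝ)) - (2 + (x:ℝ)) * a) * Real.log a)]

private lemma gg_nonneg {a : ℝ} (ha0 : 0 < a) (ha1 : a < 1) (x : ℕ) : 0 ≤ gg a x := by
  have h0 : gg a 0 = 0 := by simp [gg]
  calc (0:ℝ) = gg a 0 := h0.symm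
    _ ≤ gg a x := gg_mono ha0 ha1 (Nat.zero_le x)

private lemma gg_le {a : ℝ} (ha0 : 0 < a) (ha1 : a < 1) (x : ℕ) :
    gg a x ≤ 1 - Real.log a := by
  have hL : Real.log a < 0 := Real.log_neg ha0 ha1
  have hp : (0:ℝ) < a ^ x := pow_pos ha0 x
  have h1 : (1 + (x:ℝ)) * Real.log a - 1 < 0 := by
    have : (0:ℝ) < 1 + (x:ℝ) := by positivity
    nlinarith
  have : gg a x - (1 - Real.log a) = a ^ x * ((1 + (x:ℝ)) * Real.log a - 1) := by
    simp only [gg]; ring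
  nlinarith [mul_neg_of_pos_of_neg hp h1]

private lemma gg_tendsto {a : ℝ} (ha0 : 0 < a) (ha1 : a < 1) :
    Filter.Tendsto (gg a) Filter.atTop (nhds (1 - Real.log a)) := by
  have ha : |a| < 1 := by rw [abs_of_pos ha0]; exact ha1
  have h1 : Filter.Tendsto (fun n : ℕ => a ^ n) Filter.atTop (nhds 0) :=
    tendsto_pow_atTop_nhds_zero_of_abs_lt_one ha
  have h2 : Filter.Tendsto (fun n : ℕ => (n : ℝ) * a ^ n) Filter.atTop (nhds 0) := by
    simpa using tendsto_pow_const_mul_const_pow_of_abs_lt_one 1 ha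
  have h3 := ((tendsto_const_nhds (x := (1:ℝ))).sub h1).add
    (((h1.add h2).mul_const (Real.log a)).sub_const (Real.log a))
  have h4 : Filter.Tendsto (gg a) Filter.atTop
      (nhds ((1 - 0) + ((0 + 0) * Real.log a - Real.log a))) :=
    h3.congr fun x => by simp only [gg]; ring
  convert h4 using 2
  ring

theorem stmt5 (a b : ℝ) (ha0 : 0 < a) (ha1 : a < 1) (hb : 0 < b) :
    Monotone (fun x : ℕ => F a b x) ∧ (∀ x : ℕ, 0 ≤ F a b x ∧ F a b x ≤ 1) ∧
      Filter.Tendsto (fun x : ℕ => F a b x) Filter.atTop (nhds 1) := by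
  have hL : Real.log a < 0 := Real.log_neg ha0 ha1
  have hD : (0:ℝ) < 1 - Real.log a := by linarith
  have hDb : (0:ℝ) < (1 - Real.log a) ^ b := Real.rpow_pos_of_pos hD b
  have hLam : ∀ x : ℕ, Lam a b x = (gg a x) ^ b := fun x => rfl
  refine ⟨?_, ?_, ?_⟩
  · intro x y hxy
    simp only [F, hLam]
    gcongr
    · exact gg_nonneg ha0 ha1 _
    · exact gg_mono ha0 ha1 (by omega : x + 1 ≤ y + 1)
  · intro x
    constructor
    · exact div_nonneg (Real.rpow_nonneg (gg_nonneg ha0 ha1 _) b) hDb.le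
    · rw [F, hLam, div_le_one hDb]
      exact Real.rpow_le_rpow (gg_nonneg ha0 ha1 _) (gg_le ha0 ha1 _) hb.le
  · have hnum : Filter.Tendsto (fun x : ℕ => (gg a (x + 1)) ^ b) Filter.atTop
        (nhds ((1 - Real.log a) ^ b)) := by
      have hcont : ContinuousAt (fun t : ℝ => t ^ b) (1 - Real.log a) :=
        Real.continuousAt_rpow_const _ _ (Or.inl hD.ne')
      exact hcont.tendsto.comp ((gg_tendsto ha0 ha1).comp (Filter.tendsto_add_atTop_nat 1))
    have := hnum.div_const ((1 - Real.log a) ^ b)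
    rw [div_self hDb.ne'] at this
    exact this
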